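/- Assume in addition that (α² − β²) sin η₀ cos η₀ ≠ 0, and set k₁ = (α² − β²) sin η₀ cos η₀ / p² and N(s) = (γ''(s) + γ(s)) / k₁ (the unit normal of γ in S³). Then the second curvature scalar (torsion) of γ with respect to S³ is constant: for all s, ‖N'(s) + k₁ γ'(s)‖ = |α β| / p². (Here N'(s) is the covariant derivative DN/ds on S³, since ⟨N'(s), γ(s)⟩ = 0, and k₂ = ‖DN/ds + k₁ T‖ with T = γ'.) -/

import Mathlib

open Real

lemma hasDerivAt_E4 {f : ℝ → EuclideanSpace ℝ (Fin 4)} {g : EuclideanSpace ℝ (Fin 4)} {s : ℝ}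
    (h : ∀ i, HasDerivAt (fun t => f t i) (g i) s) :
    HasDerivAt f g s :=
  ((EuclideanSpace.equiv (Fin 4) ℝ).symm.toContinuousLinearMap.hasFDerivAt.comp_hasDerivAt s
    (hasDerivAt_pi.2 h))

lemma hasDerivAt_E4' {f0 f1 f2 f3 : ℝ → ℝ} {g0 g1 g2 g3 : ℝ} {s : ℝ}
    (h0 : HasDerivAt f0 g0 s) (h1 : HasDerivAt f1 g1 s)
    (h2 : HasDerivAt f2 g2 s) (h3 : HasDerivAt f3 g3 s) :
    HasDerivAt (fun t => (WithLp.equiv 2 (Fin 4 → ℝ)).symm ![f0 t, f1 t, f2 t, f3 t])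
      ((WithLp.equiv 2 (Fin 4 → ℝ)).symm ![g0, g1, g2, g3]) s := by
  apply hasDerivAt_E4
  intro i
  fin_cases i
  exacts [h0, h1, h2, h3]

lemma hd_lin (a q x : ℝ) : HasDerivAt (fun t : ℝ => a * t / q) (a / q) x := by
  simpa using ((hasDerivAt_id x).const_mul a).div_const q

theorem hopf_curve_constant_torsion
    (η₀ α β : ℝ) (hη₀ : η₀ ∈ Set.Ioo 0 (Real.pi / 2)) (hαβ : ¬(α = 0 ∧ β = 0))
    (p : ℝ) (hp : p = Real.sqrt (α ^ 2 * Real.sin η₀ ^ 2 + β ^ 2 * Real.cos η₀ ^ 2))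
    (γ : ℝ → EuclideanSpace ℝ (Fin 4))
    (hγ : ∀ s, γ s = ![Real.sin η₀ * Real.cos (α * s / p), Real.sin η₀ * Real.sin (α * s / p),
        Real.cos η₀ * Real.cos (β * s / p), Real.cos η₀ * Real.sin (β * s / p)])
    (hne : (α ^ 2 - β ^ 2) * Real.sin η₀ * Real.cos η₀ ≠ 0)
    (k₁ : ℝ) (hk₁ : k₁ = (α ^ 2 - β ^ 2) * Real.sin η₀ * Real.cos η₀ / p ^ 2)
    (N : ℝ → EuclideanSpace ℝ (Fin 4))
    (hN : ∀ s, N s = k₁⁻¹ • (deriv (deriv γ) s + γ s)) :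
    ∀ s, ‖deriv N s + k₁ • deriv γ s‖ = |α * β| / p ^ 2 := by
  obtain ⟨hη₁, hη₂⟩ := hη₀
  have hs : 0 < Real.sin η₀ := Real.sin_pos_of_pos_of_lt_pi hη₁ (by linarith [Real.pi_pos])
  have hc : 0 < Real.cos η₀ := Real.cos_pos_of_mem_Ioo ⟨by linarith [Real.pi_pos], hη₂⟩
  have hpy : Real.sin η₀ ^ 2 + Real.cos η₀ ^ 2 = 1 := Real.sin_sq_add_cos_sq η₀
  have hq : 0 < α ^ 2 * Real.sin η₀ ^ 2 + β ^ 2 * Real.cos η₀ ^ 2 := by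
    rcases not_and_or.mp hαβ with h | h
    · have h1 : 0 < α ^ 2 := (sq_nonneg α).lt_of_ne' (pow_ne_zero 2 h)
      nlinarith [mul_pos h1 (pow_pos hs 2), mul_nonneg (sq_nonneg β) (sq_nonneg (Real.cos η₀))]
    · have h1 : 0 < β ^ 2 := (sq_nonneg β).lt_of_ne' (pow_ne_zero 2 h)
      nlinarith [mul_pos h1 (pow_pos hc 2), mul_nonneg (sq_nonneg α) (sq_nonneg (Real.sin η₀))]
  have hppos : 0 < p := hp ▸ Real.sqrt_pos.mpr hq
  have hpne : p ≠ 0 := ne_of_gt hppos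
  have hp2 : p ^ 2 = α ^ 2 * Real.sin η₀ ^ 2 + β ^ 2 * Real.cos η₀ ^ 2 := by
    rw [hp, Real.sq_sqrt hq.le]
  have hk₁ne : k₁ ≠ 0 := by
    rw [hk₁]; exact div_ne_zero hne (pow_ne_zero 2 hpne)
  set sη := Real.sin η₀ with hsη
  set cη := Real.cos η₀ with hcη
  set D1 : ℝ → EuclideanSpace ℝ (Fin 4) := fun s =>
    (WithLp.equiv 2 (Fin 4 → ℝ)).symm ![-(sη * α / p) * Real.sin (α * s / p), (sη * α / p) * Real.cos (α * s / p),
      -(cη * β / p) * Real.sin (β * s / p), (cη * β / p) * Real.cos (β * s / p)] with hD1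
  have hγd : ∀ s, HasDerivAt γ (D1 s) s := by
    intro s
    have hγ' : γ = fun s => (WithLp.equiv 2 (Fin 4 → ℝ)).symm ![sη * Real.cos (α * s / p), sη * Real.sin (α * s / p),
        cη * Real.cos (β * s / p), cη * Real.sin (β * s / p)] := funext fun s => by rw [← hγ s]; rfl
    rw [hγ']
    have h0 : HasDerivAt (fun t => sη * Real.cos (α * t / p)) (-(sη * α / p) * Real.sin (α * s / p)) s := by
      have := ((hd_lin α p s).cos).const_mul sη; exact this.congr_deriv (by ring)
    have h1 : HasDerivAt (fun t => sη * Real.sin (α * t / p)) ((sη * α / p) * Real.cos (α * s / p)) s := by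
      have := ((hd_lin α p s).sin).const_mul sη; exact this.congr_deriv (by ring)
    have h2 : HasDerivAt (fun t => cη * Real.cos (β * t / p)) (-(cη * β / p) * Real.sin (β * s / p)) s := by
      have := ((hd_lin β p s).cos).const_mul cη; exact this.congr_deriv (by ring)
    have h3 : HasDerivAt (fun t => cη * Real.sin (β * t / p)) ((cη * β / p) * Real.cos (β * s / p)) s := by
      have := ((hd_lin β p s).sin).const_mul cη; exact this.congr_deriv (by ring)
    exact hasDerivAt_E4' h0 h1 h2 h3
  have hdγ : deriv γ = D1 := funext fun s => (hγd s).deriv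
  set D2 : ℝ → EuclideanSpace ℝ (Fin 4) := fun s =>
    (WithLp.equiv 2 (Fin 4 → ℝ)).symm ![-(sη * α / p * (α / p)) * Real.cos (α * s / p), -(sη * α / p * (α / p)) * Real.sin (α * s / p),
      -(cη * β / p * (β / p)) * Real.cos (β * s / p), -(cη * β / p * (β / p)) * Real.sin (β * s / p)] with hD2
  have hD1d : ∀ s, HasDerivAt D1 (D2 s) s := by
    intro s
    have h0 : HasDerivAt (fun t => -(sη * α / p) * Real.sin (α * t / p)) (-(sη * α / p * (α / p)) * Real.cos (α * s / p)) s := by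
      have := ((hd_lin α p s).sin).const_mul (-(sη * α / p)); exact this.congr_deriv (by ring)
    have h1 : HasDerivAt (fun t => (sη * α / p) * Real.cos (α * t / p)) (-(sη * α / p * (α / p)) * Real.sin (α * s / p)) s := by
      have := ((hd_lin α p s).cos).const_mul (sη * α / p); exact this.congr_deriv (by ring)
    have h2 : HasDerivAt (fun t => -(cη * β / p) * Real.sin (β * t / p)) (-(cη * β / p * (β / p)) * Real.cos (β * s / p)) s := by
      have := ((hd_lin β p s).sin).const_mul (-(cη * β / p)); exact this.congr_deriv (by ring)
    have h3 : HasDerivAt (fun t => (cη * β / p) * Real.cos (β * t / p)) (-(cη * β / p * (β / p)) * Real.sin (β * s / p)) s := by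
      have := ((hd_lin β p s).cos).const_mul (cη * β / p); exact this.congr_deriv (by ring)
    exact hasDerivAt_E4' h0 h1 h2 h3
  have hddγ : deriv (deriv γ) = D2 := by
    rw [hdγ]; exact funext fun s => (hD1d s).deriv
  have e1 : k₁⁻¹ * (-(sη * α / p * (α / p)) + sη) = -cη := by
    rw [inv_mul_eq_iff_eq_mul₀ hk₁ne, hk₁]
    linear_combination (sη * α ^ 2 * p⁻¹ ^ 2) * hpy + (sη * p⁻¹ ^ 2) * hp2
      - (sη * (p * p⁻¹ + 1)) * (mul_inv_cancel₀ hpne)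
  have e2 : k₁⁻¹ * (-(cη * β / p * (β / p)) + cη) = sη := by
    rw [inv_mul_eq_iff_eq_mul₀ hk₁ne, hk₁]
    linear_combination (cη * β ^ 2 * p⁻¹ ^ 2) * hpy + (cη * p⁻¹ ^ 2) * hp2
      - (cη * (p * p⁻¹ + 1)) * (mul_inv_cancel₀ hpne)
  have hNeq : N = fun s => (WithLp.equiv 2 (Fin 4 → ℝ)).symm ![-cη * Real.cos (α * s / p), -cη * Real.sin (α * s / p),
      sη * Real.cos (β * s / p), sη * Real.sin (β * s / p)] := by
    funext s
    rw [hN s, hddγ, show γ s = (WithLp.equiv 2 (Fin 4 → ℝ)).symm ![sη * Real.cos (α * s / p), sη * Real.sin (α * s / p),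
        cη * Real.cos (β * s / p), cη * Real.sin (β * s / p)] from by rw [← hγ s]; rfl]
    ext i
    fin_cases i
    · show k₁⁻¹ * (-(sη * α / p * (α / p)) * Real.cos (α * s / p) + sη * Real.cos (α * s / p))
        = -cη * Real.cos (α * s / p)
      linear_combination Real.cos (α * s / p) * e1
    · show k₁⁻¹ * (-(sη * α / p * (α / p)) * Real.sin (α * s / p) + sη * Real.sin (α * s / p))
        = -cη * Real.sin (α * s / p)
      linear_combination Real.sin (α * s / p) * e1
    · show k₁⁻¹ * (-(cη * β / p * (β / p)) * Real.cos (β * s / p) + cη * Real.cos (β * s / p))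
        = sη * Real.cos (β * s / p)
      linear_combination Real.cos (β * s / p) * e2
    · show k₁⁻¹ * (-(cη * β / p * (β / p)) * Real.sin (β * s / p) + cη * Real.sin (β * s / p))
        = sη * Real.sin (β * s / p)
      linear_combination Real.sin (β * s / p) * e2
  set DN : ℝ → EuclideanSpace ℝ (Fin 4) := fun s =>
    (WithLp.equiv 2 (Fin 4 → ℝ)).symm ![(cη * α / p) * Real.sin (α * s / p), -(cη * α / p) * Real.cos (α * s / p),
      -(sη * β / p) * Real.sin (β * s / p), (sη * β / p) * Real.cos (β * s / p)] with hDN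
  have hNd : ∀ s, HasDerivAt N (DN s) s := by
    intro s
    rw [hNeq]
    have h0 : HasDerivAt (fun t => -cη * Real.cos (α * t / p)) ((cη * α / p) * Real.sin (α * s / p)) s := by
      have := ((hd_lin α p s).cos).const_mul (-cη); exact this.congr_deriv (by ring)
    have h1 : HasDerivAt (fun t => -cη * Real.sin (α * t / p)) (-(cη * α / p) * Real.cos (α * s / p)) s := by
      have := ((hd_lin α p s).sin).const_mul (-cη); exact this.congr_deriv (by ring)
    have h2 : HasDerivAt (fun t => sη * Real.cos (β * t / p)) (-(sη * β / p) * Real.sin (β * s / p)) s := by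
      have := ((hd_lin β p s).cos).const_mul sη; exact this.congr_deriv (by ring)
    have h3 : HasDerivAt (fun t => sη * Real.sin (β * t / p)) ((sη * β / p) * Real.cos (β * s / p)) s := by
      have := ((hd_lin β p s).sin).const_mul sη; exact this.congr_deriv (by ring)
    exact hasDerivAt_E4' h0 h1 h2 h3
  have hdN : deriv N = DN := funext fun s => (hNd s).deriv
  intro s
  rw [hdN, hdγ, EuclideanSpace.norm_eq, Fin.sum_univ_four]
  simp only [hDN, hD1, WithLp.equiv_symm_apply, PiLp.toLp_apply, PiLp.add_apply, PiLp.smul_apply, smul_eq_mul, Matrix.cons_val_zero,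
    Matrix.cons_val_one, Matrix.head_cons, Matrix.cons_val_two, Matrix.tail_cons,
    Matrix.cons_val_three, Real.norm_eq_abs, sq_abs]
  have key : ((cη * α / p) * Real.sin (α * s / p) + k₁ * (-(sη * α / p) * Real.sin (α * s / p))) ^ 2
      + (-(cη * α / p) * Real.cos (α * s / p) + k₁ * ((sη * α / p) * Real.cos (α * s / p))) ^ 2
      + (-(sη * β / p) * Real.sin (β * s / p) + k₁ * (-(cη * β / p) * Real.sin (β * s / p))) ^ 2
      + ((sη * β / p) * Real.cos (β * s / p) + k₁ * ((cη * β / p) * Real.cos (β * s / p))) ^ 2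
      = (α * β / p ^ 2) ^ 2 := by
    have hinv : p * p⁻¹ = 1 := mul_inv_cancel₀ hpne
    have hA := Real.sin_sq_add_cos_sq (α * s / p)
    have hB := Real.sin_sq_add_cos_sq (β * s / p)
    have f1 : cη - k₁ * sη = cη * β ^ 2 / p ^ 2 := by
      linear_combination (-sη) * hk₁ + (cη / p ^ 2) * hp2 + (cη * β ^ 2 / p ^ 2) * hpy
        - (cη * (p * p⁻¹ + 1)) * hinv
    have f2 : sη + k₁ * cη = sη * α ^ 2 / p ^ 2 := by
      linear_combination cη * hk₁ + (sη / p ^ 2) * hp2 + (sη * α ^ 2 / p ^ 2) * hpy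
        - (sη * (p * p⁻¹ + 1)) * hinv
    linear_combination ((α / p) ^ 2 * (cη - k₁ * sη) ^ 2) * hA
      + ((β / p) ^ 2 * (sη + k₁ * cη) ^ 2) * hB
      + ((α / p) ^ 2 * ((cη - k₁ * sη) + cη * β ^ 2 / p ^ 2)) * f1
      + ((β / p) ^ 2 * ((sη + k₁ * cη) + sη * α ^ 2 / p ^ 2)) * f2
      - (α ^ 2 * β ^ 2 / p ^ 6) * hp2
      + (α ^ 2 * β ^ 2 * p⁻¹ ^ 4 * (p * p⁻¹ + 1)) * hinv
  rw [key, Real.sqrt_sq_eq_abs, abs_div, abs_pow, abs_of_pos hppos]
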